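/- arXiv:2001.00362 — 2 statements merged into one kernel-verified Lean document; each statement's English description precedes it below -/
import Mathlib

section
/- Discrete Gronwall inequality: let (r^m), (s^m), (p^m), (y^m) be sequences of nonnegative reals with (r⁰)² + (s⁰)² ≤ (p⁰)², and suppose for all m ≥ 1 that (r^m)² + (s^m)² ≤ ∑_{j=0}^{m-1} (y^j)²(r^j)² + ∑_{j=0}^{m} (p^j)². Then for all m ≥ 1, (r^m)² + (s^m)² ≤ exp(∑_{j=0}^{m-1} (y^j)²) · ∑_{j=0}^{m} (p^j)². -/
namespace Paper

theorem discrete_gronwall (r s p y : ℕ → ℝ)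
    (hr : ∀ n, 0 ≤ r n) (hs : ∀ n, 0 ≤ s n) (hp : ∀ n, 0 ≤ p n) (hy : ∀ n, 0 ≤ y n)
    (h0 : (r 0) ^ 2 + (s 0) ^ 2 ≤ (p 0) ^ 2)
    (hrec : ∀ m : ℕ, 1 ≤ m →
      (r m) ^ 2 + (s m) ^ 2 ≤
        ∑ j ∈ Finset.range m, (y j) ^ 2 * (r j) ^ 2 +
        ∑ j ∈ Finset.range (m + 1), (p j) ^ 2) :
    ∀ m : ℕ, 1 ≤ m →
      (r m) ^ 2 + (s m) ^ 2 ≤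
        Real.exp (∑ j ∈ Finset.range m, (y j) ^ 2) *
          ∑ j ∈ Finset.range (m + 1), (p j) ^ 2 := by
  set a : ℕ → ℝ := fun j => y j ^ 2 with ha
  set P : ℕ → ℝ := fun m => ∑ j ∈ Finset.range (m + 1), p j ^ 2 with hP
  have ha0 : ∀ j, 0 ≤ a j := fun j => sq_nonneg _
  have hP0 : ∀ m, 0 ≤ P m := fun m =>
    Finset.sum_nonneg fun j _ => sq_nonneg _
  have hPmono : Monotone P := by
    intro m n hmn
    exact Finset.sum_le_sum_of_subset_of_nonneg
      (Finset.range_subset_range.2 (by omega)) (fun j _ _ => sq_nonneg _)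
  have tel : ∀ m, ∑ j ∈ Finset.range m, a j * ∏ i ∈ Finset.range j, (1 + a i)
      = ∏ j ∈ Finset.range m, (1 + a j) - 1 := by
    intro m
    induction m with
    | zero => simp
    | succ n ih =>
      rw [Finset.sum_range_succ, Finset.prod_range_succ, ih]; ring
  have key : ∀ m, r m ^ 2 + s m ^ 2 ≤ (∏ j ∈ Finset.range m, (1 + a j)) * P m := by
    intro m
    induction m using Nat.strong_induction_on with
    | _ m ih =>
      match m with
      | 0 => simpa [hP] using h0
      | Nat.succ n =>
        have h1 : r (n+1) ^ 2 + s (n+1) ^ 2 ≤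
            ∑ j ∈ Finset.range (n+1), a j * r j ^ 2 + P (n+1) := hrec (n+1) (by omega)
        have h2 : ∑ j ∈ Finset.range (n+1), a j * r j ^ 2 ≤
            ∑ j ∈ Finset.range (n+1), a j * ((∏ i ∈ Finset.range j, (1 + a i)) * P (n+1)) := by
          apply Finset.sum_le_sum
          intro j hj
          apply mul_le_mul_of_nonneg_left _ (ha0 j)
          calc r j ^ 2 ≤ r j ^ 2 + s j ^ 2 := by nlinarith [sq_nonneg (s j)]
            _ ≤ (∏ i ∈ Finset.range j, (1 + a i)) * P j := ih j (Finset.mem_range.1 hj)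
            _ ≤ (∏ i ∈ Finset.range j, (1 + a i)) * P (n+1) := by
                apply mul_le_mul_of_nonneg_left (hPmono (le_of_lt (Finset.mem_range.1 hj)))
                exact Finset.prod_nonneg fun i _ => by nlinarith [ha0 i]
        have h3 : ∑ j ∈ Finset.range (n+1), a j * ((∏ i ∈ Finset.range j, (1 + a i)) * P (n+1))
            + P (n+1) = (∏ j ∈ Finset.range (n+1), (1 + a j)) * P (n+1) := by
          have : ∑ j ∈ Finset.range (n+1), a j * ((∏ i ∈ Finset.range j, (1 + a i)) * P (n+1))
              = (∑ j ∈ Finset.range (n+1), a j * ∏ i ∈ Finset.range j, (1 + a i)) * P (n+1) := by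
            rw [Finset.sum_mul]; exact Finset.sum_congr rfl fun j _ => by ring
          rw [this, tel]; ring
        linarith
  intro m hm
  have hprod : (∏ j ∈ Finset.range m, (1 + a j)) ≤ Real.exp (∑ j ∈ Finset.range m, a j) := by
    rw [Real.exp_sum]
    apply Finset.prod_le_prod
    · intro i _; nlinarith [ha0 i]
    · intro i _; linarith [Real.add_one_le_exp (a i)]
  calc r m ^ 2 + s m ^ 2 ≤ (∏ j ∈ Finset.range m, (1 + a j)) * P m := key m
    _ ≤ Real.exp (∑ j ∈ Finset.range m, a j) * P m :=
        mul_le_mul_of_nonneg_right hprod (hP0 m)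

end Paper
end

section
/- Coercivity of the coupled operator: under the same hypotheses, with γ = min(μ₁,ν₁), for every (B,N) ∈ H, (L(B,N),(B,N)) ≥ (1 − Δt M)(‖B‖₀² + ‖N‖₀²) + Δt γ(‖B‖₁² + ‖N‖₁²). Hence if either γ > 2MC_PF² or Δt < C_PF²/(2MC_PF² − γ), then (L(B,N),(B,N))/‖(B,N)‖_H → ∞ as ‖(B,N)‖_H → ∞. -/
/-- Coercivity of the coupled operator `L`. Same abstract setting as the
monotonicity lemma: `V` models `H¹₀(Ω)` with `‖·‖ = ‖·‖₁ = ‖∇·‖₀`; `inner0` is the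
`L²` inner product with norm `norm0` (Poincaré: `norm0 v ≤ C_PF ‖v‖`);
`aB, aN` are the diffusion forms with lower bounds `μ₁, ν₁`;
`fF B N ψ = (F(B,N),ψ)₀`, `fG B N χ = (G(B,N),χ)₀` satisfy, thanks to
`F(0,N) = 0`, `G(B,0) = 0` and Lipschitz continuity with constant `M`,
`|fF B N ψ| ≤ M ‖B‖₀ ‖ψ‖₀` and `|fG B N χ| ≤ M ‖N‖₀ ‖χ‖₀`.
Then `(L(B,N),(B,N)) ≥ (1 − Δt M)(‖B‖₀² + ‖N‖₀²) + Δt γ (‖B‖₁² + ‖N‖₁²)` with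
`γ = min(μ₁,ν₁)`; hence if `γ > 2MC_PF²` or `Δt < C_PF²/(2MC_PF² − γ)`, the quotient
`(L(B,N),(B,N))/‖(B,N)‖_H` tends to `∞` as `‖(B,N)‖_H → ∞`. -/
theorem coupled_operator_coercivity
    {V : Type*} [NormedAddCommGroup V] [InnerProductSpace ℝ V]
    (inner0 : V → V → ℝ) (norm0 : V → ℝ) (aB aN : V → V → ℝ) (fF fG : V → V → V → ℝ)
    (Δt M μ₁ ν₁ CPF : ℝ)
    (hΔt : 0 < Δt) (hM : 0 ≤ M) (hμ₁ : 0 < μ₁) (hν₁ : 0 < ν₁) (hCPF : 0 < CPF)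
    (hnorm0 : ∀ v, norm0 v ^ 2 = inner0 v v) (hnorm0nn : ∀ v, 0 ≤ norm0 v)
    (hPF : ∀ v, norm0 v ≤ CPF * ‖v‖)
    (haB : ∀ v, μ₁ * ‖v‖ ^ 2 ≤ aB v v) (haN : ∀ v, ν₁ * ‖v‖ ^ 2 ≤ aN v v)
    (hF : ∀ B N ψ, |fF B N ψ| ≤ M * norm0 B * norm0 ψ)
    (hG : ∀ B N χ, |fG B N χ| ≤ M * norm0 N * norm0 χ) :
    (∀ B N : V,
      inner0 B B - Δt * fF B N B + Δt * aB B B +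
        inner0 N N - Δt * fG B N N + Δt * aN N N ≥
      (1 - Δt * M) * (norm0 B ^ 2 + norm0 N ^ 2) +
        Δt * min μ₁ ν₁ * (‖B‖ ^ 2 + ‖N‖ ^ 2)) ∧
    ((min μ₁ ν₁ > 2 * M * CPF ^ 2 ∨ Δt < CPF ^ 2 / (2 * M * CPF ^ 2 - min μ₁ ν₁)) →
      ∀ C : ℝ, ∃ R : ℝ, ∀ B N : V,
        R ≤ Real.sqrt (‖B‖ ^ 2 + ‖N‖ ^ 2) →
        C * Real.sqrt (‖B‖ ^ 2 + ‖N‖ ^ 2) ≤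
          inner0 B B - Δt * fF B N B + Δt * aB B B +
            inner0 N N - Δt * fG B N N + Δt * aN N N) := by

  have hγ : (0:ℝ) < min μ₁ ν₁ := lt_min hμ₁ hν₁
  have main : ∀ B N : V,
      inner0 B B - Δt * fF B N B + Δt * aB B B +
        inner0 N N - Δt * fG B N N + Δt * aN N N ≥
      (1 - Δt * M) * (norm0 B ^ 2 + norm0 N ^ 2) +
        Δt * min μ₁ ν₁ * (‖B‖ ^ 2 + ‖N‖ ^ 2) := by
    intro B N
    have h1 := (abs_le.mp (hF B N B)).2
    have h2 := (abs_le.mp (hG B N N)).2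
    have h3 := haB B
    have h4 := haN N
    have h5 : min μ₁ ν₁ ≤ μ₁ := min_le_left _ _
    have h6 : min μ₁ ν₁ ≤ ν₁ := min_le_right _ _
    have e1 := hnorm0 B
    have e2 := hnorm0 N
    nlinarith [sq_nonneg (‖B‖), sq_nonneg (‖N‖), hΔt.le, mul_nonneg hΔt.le (sq_nonneg (‖B‖)),
      mul_nonneg hΔt.le (sq_nonneg (‖N‖))]
  refine ⟨main, ?_⟩
  intro h C
  set γ := min μ₁ ν₁ with hγdef
  set ε := min (Δt * γ) ((1 - Δt * M) * CPF ^ 2 + Δt * γ) with hεdef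
  have hε : 0 < ε := by
    apply lt_min (by positivity)
    rcases h with h | h
    · nlinarith [sq_nonneg CPF, mul_nonneg hΔt.le (sq_nonneg CPF)]
    · rcases le_or_gt (2 * M * CPF ^ 2 - γ) 0 with hd | hd
      · nlinarith [sq_nonneg CPF]
      · have h' : Δt * (2 * M * CPF ^ 2 - γ) < CPF ^ 2 := (lt_div_iff₀ hd).mp h
        nlinarith [sq_nonneg CPF, mul_nonneg hΔt.le (mul_nonneg hM (sq_nonneg CPF))]
  refine ⟨max (C / ε) 1, ?_⟩
  intro B N hs
  set s := Real.sqrt (‖B‖ ^ 2 + ‖N‖ ^ 2) with hsdef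
  have hS : s ^ 2 = ‖B‖ ^ 2 + ‖N‖ ^ 2 := Real.sq_sqrt (by positivity)
  have hs1 : (1:ℝ) ≤ s := le_trans (le_max_right _ _) hs
  have hCs : C ≤ ε * s := by
    have : C / ε ≤ s := le_trans (le_max_left _ _) hs
    rw [div_le_iff₀ hε] at this
    linarith [this]
  have key : ε * (‖B‖ ^ 2 + ‖N‖ ^ 2) ≤
      (1 - Δt * M) * (norm0 B ^ 2 + norm0 N ^ 2) + Δt * γ * (‖B‖ ^ 2 + ‖N‖ ^ 2) := by
    rcases le_or_gt 0 (1 - Δt * M) with hc | hc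
    · have hε1 : ε ≤ Δt * γ := min_le_left _ _
      nlinarith [sq_nonneg (norm0 B), sq_nonneg (norm0 N), sq_nonneg (‖B‖), sq_nonneg (‖N‖)]
    · have hε2 : ε ≤ (1 - Δt * M) * CPF ^ 2 + Δt * γ := min_le_right _ _
      have pB : norm0 B ^ 2 ≤ CPF ^ 2 * ‖B‖ ^ 2 := by
        nlinarith [hPF B, hnorm0nn B, norm_nonneg B, mul_nonneg hCPF.le (norm_nonneg B)]
      have pN : norm0 N ^ 2 ≤ CPF ^ 2 * ‖N‖ ^ 2 := by
        nlinarith [hPF N, hnorm0nn N, norm_nonneg N, mul_nonneg hCPF.le (norm_nonneg N)]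
      nlinarith [sq_nonneg (‖B‖), sq_nonneg (‖N‖)]
  have hmain := main B N
  have hs0 : 0 < s := lt_of_lt_of_le one_pos hs1
  nlinarith [mul_le_mul_of_nonneg_right hCs hs0.le, key, hS]
end
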